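/- Suppose 0 ≤ ρ < ρ̂₂. Then the infimum of g(t,s) over the region B̄ = {(t,s) : 0 < t ≤ s} equals g_L(t*) = (2/(1+ρ))(μ₁+μ₂+2/t*), and (t*, t*) is the unique minimizer of g on B̄. -/

import Mathlib

open Matrix

/-- The covariance matrix of `(X₁(t), X₂(s))`. -/
noncomputable def covM (ρ t s : ℝ) : Matrix (Fin 2) (Fin 2) ℝ :=
  !![t, ρ * min t s; ρ * min t s, s]

/-- The quadratic form `(x,y) Σ_{ts}⁻¹ (x,y)ᵀ`. -/
noncomputable def quadF (ρ t s x y : ℝ) : ℝ :=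
  dotProduct ![x, y] ((covM ρ t s)⁻¹.mulVec ![x, y])

/-- `g(t,s) = inf{ (x,y) Σ_{ts}⁻¹ (x,y)ᵀ : x ≥ 1+μ₁t, y ≥ 1+μ₂s }`. -/
noncomputable def gFun (μ₁ μ₂ ρ t s : ℝ) : ℝ :=
  sInf { q : ℝ | ∃ x y : ℝ, 1 + μ₁ * t ≤ x ∧ 1 + μ₂ * s ≤ y ∧ q = quadF ρ t s x y }

/-- `g₃(t,s)`: the quadratic form at the corner point `(1+μ₁t, 1+μ₂s)`. -/
noncomputable def g3Fun (μ₁ μ₂ ρ t s : ℝ) : ℝ :=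
  quadF ρ t s (1 + μ₁ * t) (1 + μ₂ * s)

/-- `g_L(s)`: the value of `g₃` on the diagonal. -/
noncomputable def gLFun (μ₁ μ₂ ρ s : ℝ) : ℝ :=
  ((1 + μ₁ * s) ^ 2 + (1 + μ₂ * s) ^ 2 - 2 * ρ * (1 + μ₁ * s) * (1 + μ₂ * s))
    / ((1 - ρ ^ 2) * s)

set_option maxHeartbeats 4000000

lemma quadF_eq (ρ t s x y : ℝ) (hts : t ≤ s) (ht : t ≠ 0) (hd : s - ρ^2*t ≠ 0) :
    quadF ρ t s x y = (s*x^2 - 2*ρ*t*x*y + t*y^2) / (t*(s - ρ^2*t)) := by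
  have hmin : covM ρ t s = !![t, ρ*t; ρ*t, s] := by
    rw [covM, min_eq_left hts]
  have hinv : (covM ρ t s)⁻¹ =
      !![s/(t*(s-ρ^2*t)), -(ρ*t)/(t*(s-ρ^2*t));
         -(ρ*t)/(t*(s-ρ^2*t)), t/(t*(s-ρ^2*t))] := by
    have hd' : s - t*ρ^2 ≠ 0 := by rwa [mul_comm] at hd
    apply Matrix.inv_eq_right_inv
    rw [hmin]
    ext i j
    fin_cases i <;> fin_cases j <;>
      simp [Matrix.mul_apply, Fin.sum_univ_two] <;>
      field_simp <;> ring
  rw [quadF, hinv]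
  simp [Matrix.mulVec, dotProduct, Fin.sum_univ_two]
  field_simp
  ring

lemma sign_aux (P Y R S B C : ℝ) (hP : 0 < P)
    (hkey : P*Y = R*(S^2 + B^2 + 2*B*C)) (hR : 0 < R) (hB : 0 ≤ B) (hC : 0 ≤ C)
    (hS2 : 0 ≤ S^2) (hB2 : 0 ≤ B^2) : 0 ≤ Y := by
  have hRHS : 0 ≤ R*(S^2 + B^2 + 2*B*C) := by
    have := mul_nonneg hB hC
    have : 0 ≤ S^2 + B^2 + 2*B*C := by linarith
    exact mul_nonneg hR.le this
  nlinarith [hkey, hP, hRHS]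

lemma sign_aux_strictB (P Y R S B C : ℝ) (hP : 0 < P)
    (hkey : P*Y = R*(S^2 + B^2 + 2*B*C)) (hR : 0 < R) (hB : 0 < B) (hC : 0 < C)
    (hS2 : 0 ≤ S^2) (hB2 : 0 ≤ B^2) : 0 < Y := by
  have hRHS : 0 < R*(S^2 + B^2 + 2*B*C) := by
    have := mul_pos hB hC
    have : 0 < S^2 + B^2 + 2*B*C := by linarith
    exact mul_pos hR this
  nlinarith [hkey, hP, hRHS]

lemma sign_aux_strictS (P Y R S B C : ℝ) (hP : 0 < P)
    (hkey : P*Y = R*(S^2 + B^2 + 2*B*C)) (hR : 0 < R) (hS2 : 0 < S^2)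
    (hB : 0 ≤ B) (hC : 0 ≤ C) (hB2 : 0 ≤ B^2) : 0 < Y := by
  have hRHS : 0 < R*(S^2 + B^2 + 2*B*C) := by
    have := mul_nonneg hB hC
    have : 0 < S^2 + B^2 + 2*B*C := by linarith
    exact mul_pos hR this
  nlinarith [hkey, hP, hRHS]

lemma Y_key (μ₁ μ₂ ρ m t s L1 L2 : ℝ) (hμ1 : 0 < μ₁) (hμ12 : μ₁ ≤ μ₂)
    (hρ0 : 0 ≤ ρ) (hρ1 : ρ < 1) (hρ2 : 2*ρ*μ₂ < μ₁+μ₂) (hm : 0 < m)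
    (hcm : (μ₁^2+μ₂^2-2*ρ*μ₁*μ₂)*m^2 = 2*(1-ρ))
    (hL1 : L1 = (1+μ₁*m) - ρ*(1+μ₂*m)) (hL2 : L2 = (1+μ₂*m) - ρ*(1+μ₁*m))
    (ht : 0 < t) (hts : t ≤ s) :
    0 ≤ (1-ρ^2)*(L1*(1+μ₁*t)+L2*(1+μ₂*s))^2
        - 2*(μ₁*L1+μ₂*L2)*((L1^2+2*ρ*L1*L2)*t+L2^2*s)
    ∧ ((0 < ρ ∨ μ₁ < μ₂) → (t ≠ m ∨ s ≠ m) →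
      0 < (1-ρ^2)*(L1*(1+μ₁*t)+L2*(1+μ₂*s))^2
        - 2*(μ₁*L1+μ₂*L2)*((L1^2+2*ρ*L1*L2)*t+L2^2*s)) := by
  have hμ2 : 0 < μ₂ := lt_of_lt_of_le hμ1 hμ12
  have hs : 0 < s := lt_of_lt_of_le ht hts
  have hρ1' : 0 < 1 - ρ := by linarith
  have hρsq : ρ^2 < 1 := by nlinarith
  have hc : 0 < μ₁^2+μ₂^2-2*ρ*μ₁*μ₂ := by nlinarith
  have hl2 : 0 < L2 := by
    have h1 : ρ*μ₁ ≤ μ₂ := by nlinarith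
    have h2 : 0 ≤ (μ₂ - ρ*μ₁)*m := mul_nonneg (by linarith) hm.le
    rw [hL2]; nlinarith
  have hl1 : 0 < L1 := by
    rw [hL1]
    rcases le_or_gt (ρ*μ₂) μ₁ with h | h
    · nlinarith
    · have hμlt : μ₁ < μ₂ := by nlinarith
      have hprod : 0 < (μ₂-μ₁)*((1+ρ)*(μ₁+μ₂-2*ρ*μ₂)) := by
        apply mul_pos (by linarith)
        apply mul_pos (by linarith) (by linarith)
      have hF : 2*(ρ*μ₂-μ₁)^2 < (1-ρ)*(μ₁^2+μ₂^2-2*ρ*μ₁*μ₂) := by nlinarith [hprod]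
      have hcm' : (1-ρ)*((μ₁^2+μ₂^2-2*ρ*μ₁*μ₂)*m^2) = (1-ρ)*(2*(1-ρ)) := by rw [hcm]
      have h4 := mul_lt_mul_of_pos_right hF (mul_pos hm hm)
      have h2 : (ρ*μ₂-μ₁)^2*m^2 < (1-ρ)^2 := by nlinarith [h4, hcm']
      have hu : (ρ*μ₂-μ₁)*m < 1-ρ := by nlinarith [mul_pos (sub_pos.mpr h) hm, h2]
      nlinarith [hu]
  set T := μ₁*L1+μ₂*L2 with hT
  have hTpos : 0 < T := add_pos (mul_pos hμ1 hl1) (mul_pos hμ2 hl2)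
  set G := L1*(1+μ₁*t)+L2*(1+μ₂*s) with hG
  set W := (L1^2+2*ρ*L1*L2)*t+L2^2*s with hW
  set K2 := μ₂*L1 + (2*ρ*μ₂-μ₁)*L2 with hK2
  clear_value T G W K2
  have hκid : K2 = (1-ρ)*(μ₂-μ₁+2*ρ*μ₂) + ρ*((μ₁^2+μ₂^2-2*ρ*μ₁*μ₂)*m) := by
    rw [hK2, hL1, hL2]; ring
  have hκ : 0 ≤ K2 := by
    rw [hκid]
    have h1 : 0 ≤ (1-ρ)*(μ₂-μ₁+2*ρ*μ₂) := by
      apply mul_nonneg hρ1'.le; nlinarith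
    have h2 : 0 ≤ ρ*((μ₁^2+μ₂^2-2*ρ*μ₁*μ₂)*m) :=
      mul_nonneg hρ0 (mul_nonneg hc.le hm.le)
    linarith
  have hP : L1^2+2*ρ*L1*L2+L2^2 = 2*(1-ρ^2)*T*m := by
    rw [hT, hL1, hL2]; linear_combination (-(1-ρ^2))*hcm
  have halpha : L1+L2 = T*m := by
    rw [hT, hL1, hL2]; linear_combination -hcm
  have hdec : (L1^2+2*ρ*L1*L2+L2^2)*G
      = (L1^2+2*ρ*L1*L2+L2^2)*(L1+L2) + T*W + (L1*L2*K2)*(s-t) := by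
    rw [hG, hW, hT, hK2]; ring
  rw [hP, halpha] at hdec
  have hkey : (2*(1-ρ^2)*T*m)^2 * ((1-ρ^2)*G^2 - 2*T*W)
      = (1-ρ^2)*((T*W - 2*(1-ρ^2)*T*m*(T*m))^2 + (L1*L2*K2*(s-t))^2
          + 2*(L1*L2*K2*(s-t))*(2*(1-ρ^2)*T*m*(T*m) + T*W)) := by
    linear_combination ((1-ρ^2)*((2*(1-ρ^2)*T*m)*G + (2*(1-ρ^2)*T*m)*(T*m) + T*W
      + (L1*L2*K2)*(s-t)))*hdec
  have hone : 0 < 1 - ρ^2 := by nlinarith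
  have hWpos : 0 < W := by
    rw [hW]
    have h1 : 0 < L1^2*t := by positivity
    have h2 : 0 < L2^2*s := by positivity
    have h3 : 0 ≤ 2*ρ*L1*L2*t := by positivity
    nlinarith
  have hBst : 0 ≤ L1*L2*K2*(s-t) := by
    have h5 : 0 ≤ s - t := by linarith
    exact mul_nonneg (mul_nonneg (mul_nonneg hl1.le hl2.le) hκ) h5
  have hRRTW : 0 < 2*(1-ρ^2)*T*m*(T*m) + T*W := by
    have h1 : 0 < 2*(1-ρ^2)*T*m*(T*m) :=
      mul_pos (mul_pos (mul_pos (by linarith) hTpos) hm) (mul_pos hTpos hm)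
    nlinarith [mul_pos hTpos hWpos]
  have hP2 : 0 < (2*(1-ρ^2)*T*m)^2 := by
    have h1 : 0 < 2*(1-ρ^2)*T*m := by
      exact mul_pos (mul_pos (by linarith) hTpos) hm
    positivity
  constructor
  · exact sign_aux _ _ _ _ _ _ hP2 hkey hone hBst hRRTW.le
      (sq_nonneg _) (sq_nonneg _)
  · intro hcase hne
    rcases lt_or_eq_of_le hts with hlt | heq
    · have hκpos : 0 < K2 := by
        rw [hκid]
        rcases hcase with h | h
        · have h2 : 0 < ρ*((μ₁^2+μ₂^2-2*ρ*μ₁*μ₂)*m) :=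
            mul_pos h (mul_pos hc hm)
          nlinarith
        · have h1 : 0 < (1-ρ)*(μ₂-μ₁+2*ρ*μ₂) := by
            apply mul_pos hρ1'; nlinarith
          have h2 : 0 ≤ ρ*((μ₁^2+μ₂^2-2*ρ*μ₁*μ₂)*m) :=
            mul_nonneg hρ0 (mul_nonneg hc.le hm.le)
          linarith
      have hB : 0 < L1*L2*K2*(s-t) := by
        have h5 : 0 < s - t := by linarith
        exact mul_pos (mul_pos (mul_pos hl1 hl2) hκpos) h5
      exact sign_aux_strictB _ _ _ _ _ _ hP2 hkey hone hB hRRTW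
        (sq_nonneg _) (sq_nonneg _)
    · subst heq
      have htm : t ≠ m := by tauto
      have hTW : T*W - 2*(1-ρ^2)*T*m*(T*m) = 2*(1-ρ^2)*T^2*m*(t-m) := by
        rw [hW]
        linear_combination (T*t)*hP
      have hS1 : 0 < (T*W - 2*(1-ρ^2)*T*m*(T*m))^2 := by
        rw [hTW]
        have h6 : t - m ≠ 0 := sub_ne_zero.mpr htm
        positivity
      exact sign_aux_strictS _ _ _ _ _ _ hP2 hkey hone hS1 hBst hRRTW.le (sq_nonneg _)

lemma cs_bound (μ₁ μ₂ ρ t s x y L1 L2 : ℝ) (hμ1 : 0 < μ₁) (hμ2 : 0 < μ₂)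
    (hρ0 : 0 ≤ ρ) (hρsq : ρ^2 < 1) (hl1 : 0 < L1) (hl2 : 0 < L2)
    (ht : 0 < t) (hts : t ≤ s) (hx : 1+μ₁*t ≤ x) (hy : 1+μ₂*s ≤ y) :
    (L1*(1+μ₁*t)+L2*(1+μ₂*s))^2 / ((L1^2+2*ρ*L1*L2)*t+L2^2*s) ≤ quadF ρ t s x y := by
  have hs : 0 < s := lt_of_lt_of_le ht hts
  have hd : 0 < s - ρ^2*t := by nlinarith
  have hD : 0 < t*(s-ρ^2*t) := mul_pos ht hd
  have hW : 0 < (L1^2+2*ρ*L1*L2)*t+L2^2*s := by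
    nlinarith [mul_pos (mul_pos hl1 hl1) ht, mul_pos (mul_pos hl2 hl2) hs,
      mul_nonneg (mul_nonneg (mul_nonneg hρ0 hl1.le) hl2.le) ht.le]
  rw [quadF_eq ρ t s x y hts (ne_of_gt ht) (ne_of_gt hd), div_le_div_iff₀ hW hD]
  have hxp : 0 < 1+μ₁*t := by nlinarith
  have hyp : 0 < 1+μ₂*s := by nlinarith
  have hG0 : 0 ≤ L1*(1+μ₁*t)+L2*(1+μ₂*s) := by positivity
  have h2 : L1*(1+μ₁*t)+L2*(1+μ₂*s) ≤ L1*x+L2*y := by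
    have h5 := mul_le_mul_of_nonneg_left hx hl1.le
    have h6 := mul_le_mul_of_nonneg_left hy hl2.le
    linarith
  have h3 : (L1*(1+μ₁*t)+L2*(1+μ₂*s))^2 ≤ (L1*x+L2*y)^2 := pow_le_pow_left₀ hG0 h2 2
  have hid : (s*x^2-2*ρ*t*x*y+t*y^2)*((L1^2+2*ρ*L1*L2)*t+L2^2*s)
      - (L1*x+L2*y)^2*(t*(s-ρ^2*t))
      = (x*(ρ*t*L1+s*L2) - y*(t*L1+ρ*t*L2))^2 := by ring
  nlinarith [sq_nonneg (x*(ρ*t*L1+s*L2) - y*(t*L1+ρ*t*L2)), hid,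
    mul_le_mul_of_nonneg_right h3 hD.le]

lemma M_le_div (μ₁ μ₂ ρ m t s L1 L2 : ℝ) (hρsq : ρ^2 < 1) (hm : 0 < m)
    (hcm : (μ₁^2+μ₂^2-2*ρ*μ₁*μ₂)*m^2 = 2*(1-ρ))
    (hL1 : L1 = (1+μ₁*m) - ρ*(1+μ₂*m)) (hL2 : L2 = (1+μ₂*m) - ρ*(1+μ₁*m))
    (hW : 0 < (L1^2+2*ρ*L1*L2)*t+L2^2*s)
    (hY : 0 ≤ (1-ρ^2)*(L1*(1+μ₁*t)+L2*(1+μ₂*s))^2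
        - 2*(μ₁*L1+μ₂*L2)*((L1^2+2*ρ*L1*L2)*t+L2^2*s)) :
    gLFun μ₁ μ₂ ρ m ≤ (L1*(1+μ₁*t)+L2*(1+μ₂*s))^2 / ((L1^2+2*ρ*L1*L2)*t+L2^2*s) := by
  have h0 : (1+μ₁*m)^2+(1+μ₂*m)^2-2*ρ*(1+μ₁*m)*(1+μ₂*m) = 2*(μ₁*L1+μ₂*L2)*m := by
    rw [hL1, hL2]; linear_combination -hcm
  have hden : 0 < (1-ρ^2)*m := by nlinarith
  rw [gLFun, div_le_div_iff₀ hden hW]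
  have h1 : (L1*(1+μ₁*t)+L2*(1+μ₂*s))^2*((1-ρ^2)*m)
      - ((1+μ₁*m)^2+(1+μ₂*m)^2-2*ρ*(1+μ₁*m)*(1+μ₂*m))*((L1^2+2*ρ*L1*L2)*t+L2^2*s)
      = m*((1-ρ^2)*(L1*(1+μ₁*t)+L2*(1+μ₂*s))^2
        - 2*(μ₁*L1+μ₂*L2)*((L1^2+2*ρ*L1*L2)*t+L2^2*s)) := by
    rw [h0]; ring
  nlinarith [mul_nonneg hm.le hY, h1]

lemma M_lt_div (μ₁ μ₂ ρ m t s L1 L2 : ℝ) (hρsq : ρ^2 < 1) (hm : 0 < m)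
    (hcm : (μ₁^2+μ₂^2-2*ρ*μ₁*μ₂)*m^2 = 2*(1-ρ))
    (hL1 : L1 = (1+μ₁*m) - ρ*(1+μ₂*m)) (hL2 : L2 = (1+μ₂*m) - ρ*(1+μ₁*m))
    (hW : 0 < (L1^2+2*ρ*L1*L2)*t+L2^2*s)
    (hY : 0 < (1-ρ^2)*(L1*(1+μ₁*t)+L2*(1+μ₂*s))^2
        - 2*(μ₁*L1+μ₂*L2)*((L1^2+2*ρ*L1*L2)*t+L2^2*s)) :
    gLFun μ₁ μ₂ ρ m < (L1*(1+μ₁*t)+L2*(1+μ₂*s))^2 / ((L1^2+2*ρ*L1*L2)*t+L2^2*s) := by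
  have h0 : (1+μ₁*m)^2+(1+μ₂*m)^2-2*ρ*(1+μ₁*m)*(1+μ₂*m) = 2*(μ₁*L1+μ₂*L2)*m := by
    rw [hL1, hL2]; linear_combination -hcm
  have hden : 0 < (1-ρ^2)*m := by nlinarith
  rw [gLFun, div_lt_div_iff₀ hden hW]
  have h1 : (L1*(1+μ₁*t)+L2*(1+μ₂*s))^2*((1-ρ^2)*m)
      - ((1+μ₁*m)^2+(1+μ₂*m)^2-2*ρ*(1+μ₁*m)*(1+μ₂*m))*((L1^2+2*ρ*L1*L2)*t+L2^2*s)
      = m*((1-ρ^2)*(L1*(1+μ₁*t)+L2*(1+μ₂*s))^2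
        - 2*(μ₁*L1+μ₂*L2)*((L1^2+2*ρ*L1*L2)*t+L2^2*s)) := by
    rw [h0]; ring
  nlinarith [mul_pos hm hY, h1]

lemma quadF_diag (μ₁ μ₂ ρ m : ℝ) (hρsq : ρ^2 < 1) (hm : 0 < m) :
    quadF ρ m m (1+μ₁*m) (1+μ₂*m) = gLFun μ₁ μ₂ ρ m := by
  have hd : m - ρ^2*m ≠ 0 := by nlinarith
  rw [quadF_eq ρ m m _ _ le_rfl (ne_of_gt hm) hd, gLFun]
  have h1 : (1-ρ^2) ≠ 0 := by nlinarith
  field_simp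
  ring

lemma sp_bound (μ t s x y : ℝ) (hμ : 0 < μ) (ht : 0 < t) (hts : t ≤ s)
    (hx : 1+μ*t ≤ x) (hy : 1+μ*s ≤ y) :
    (1+μ*t)^2/t + (1+μ*s)^2/s ≤ quadF 0 t s x y := by
  have hs : 0 < s := lt_of_lt_of_le ht hts
  have hd : s - 0^2*t ≠ 0 := by simpa using hs.ne'
  rw [quadF_eq 0 t s x y hts ht.ne' hd]
  rw [div_add_div _ _ ht.ne' hs.ne', div_le_div_iff₀ (by positivity) (by nlinarith)]
  have hxp : 0 < 1+μ*t := by nlinarith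
  have hyp : 0 < 1+μ*s := by nlinarith
  have hx2 : (1+μ*t)^2 ≤ x^2 := by nlinarith
  have hy2 : (1+μ*s)^2 ≤ y^2 := by nlinarith
  have h1 : 0 ≤ s*(x^2 - (1+μ*t)^2) := mul_nonneg hs.le (by linarith)
  have h2 : 0 ≤ t*(y^2 - (1+μ*s)^2) := mul_nonneg ht.le (by linarith)
  nlinarith [mul_pos ht hs, mul_nonneg (mul_nonneg ht.le hs.le) h1,
    mul_nonneg (mul_nonneg ht.le hs.le) h2]

lemma sp_val (μ m : ℝ) (hμ : 0 < μ) (hm : 0 < m) (hμm : μ*m = 1) :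
    gLFun μ μ 0 m = 8*μ := by
  have hmv : m = 1/μ := by field_simp; linarith [hμm]
  subst hmv
  rw [gLFun]
  field_simp
  ring_nf

lemma sp_strict (μ m t s : ℝ) (hμ : 0 < μ) (hm : 0 < m) (hμm : μ*m = 1)
    (ht : 0 < t) (hts : t ≤ s) (hne : t ≠ m ∨ s ≠ m) :
    8*μ < (1+μ*t)^2/t + (1+μ*s)^2/s := by
  have hs : 0 < s := lt_of_lt_of_le ht hts
  have hbt : 4*μ ≤ (1+μ*t)^2/t := by
    rw [le_div_iff₀ ht]; nlinarith [sq_nonneg (1-μ*t)]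
  have hbs : 4*μ ≤ (1+μ*s)^2/s := by
    rw [le_div_iff₀ hs]; nlinarith [sq_nonneg (1-μ*s)]
  rcases hne with h | h
  · have hne1 : 1 - μ*t ≠ 0 := by
      intro h0
      apply h
      have : μ*t = μ*m := by linarith
      exact mul_left_cancel₀ hμ.ne' this
    have : 4*μ < (1+μ*t)^2/t := by
      rw [lt_div_iff₀ ht]
      have : 0 < (1-μ*t)^2 := by positivity
      nlinarith
    linarith
  · have hne1 : 1 - μ*s ≠ 0 := by
      intro h0
      apply h
      have : μ*s = μ*m := by linarith
      exact mul_left_cancel₀ hμ.ne' this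
    have : 4*μ < (1+μ*s)^2/s := by
      rw [lt_div_iff₀ hs]
      have : 0 < (1-μ*s)^2 := by positivity
      nlinarith
    linarith

theorem stmt15 (μ₁ μ₂ ρ : ℝ) (hμ1 : 0 < μ₁) (hμ12 : μ₁ ≤ μ₂)
    (hρl : -1 < ρ) (hρu : ρ < 1) (hρ0 : 0 ≤ ρ) (hρ2 : ρ < (μ₁ + μ₂) / (2 * μ₂)) :
    IsLeast { v : ℝ | ∃ t s : ℝ, 0 < t ∧ t ≤ s ∧ v = gFun μ₁ μ₂ ρ t s }
      (gLFun μ₁ μ₂ ρ (Real.sqrt (2 * (1 - ρ) / (μ₁ ^ 2 + μ₂ ^ 2 - 2 * ρ * μ₁ * μ₂)))) ∧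
    gLFun μ₁ μ₂ ρ (Real.sqrt (2 * (1 - ρ) / (μ₁ ^ 2 + μ₂ ^ 2 - 2 * ρ * μ₁ * μ₂)))
      = 2 / (1 + ρ) * (μ₁ + μ₂ +
          2 / Real.sqrt (2 * (1 - ρ) / (μ₁ ^ 2 + μ₂ ^ 2 - 2 * ρ * μ₁ * μ₂))) ∧
    gFun μ₁ μ₂ ρ (Real.sqrt (2 * (1 - ρ) / (μ₁ ^ 2 + μ₂ ^ 2 - 2 * ρ * μ₁ * μ₂)))
        (Real.sqrt (2 * (1 - ρ) / (μ₁ ^ 2 + μ₂ ^ 2 - 2 * ρ * μ₁ * μ₂)))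
      = gLFun μ₁ μ₂ ρ (Real.sqrt (2 * (1 - ρ) / (μ₁ ^ 2 + μ₂ ^ 2 - 2 * ρ * μ₁ * μ₂))) ∧
    (∀ t s : ℝ, 0 < t → t ≤ s →
      gFun μ₁ μ₂ ρ t s
        = gLFun μ₁ μ₂ ρ (Real.sqrt (2 * (1 - ρ) / (μ₁ ^ 2 + μ₂ ^ 2 - 2 * ρ * μ₁ * μ₂))) →
      t = Real.sqrt (2 * (1 - ρ) / (μ₁ ^ 2 + μ₂ ^ 2 - 2 * ρ * μ₁ * μ₂)) ∧
      s = Real.sqrt (2 * (1 - ρ) / (μ₁ ^ 2 + μ₂ ^ 2 - 2 * ρ * μ₁ * μ₂))) := by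
  have hμ2 : 0 < μ₂ := hμ1.trans_le hμ12
  have hρ2' : 2*ρ*μ₂ < μ₁+μ₂ := by
    rw [lt_div_iff₀ (by positivity)] at hρ2; linarith
  have hρsq : ρ^2 < 1 := by nlinarith
  have h1ρ : 0 < 1 - ρ := by linarith
  have hc : 0 < μ₁^2+μ₂^2-2*ρ*μ₁*μ₂ := by nlinarith
  set m := Real.sqrt (2 * (1 - ρ) / (μ₁ ^ 2 + μ₂ ^ 2 - 2 * ρ * μ₁ * μ₂)) with hmdef
  have hm : 0 < m := Real.sqrt_pos.mpr (by positivity)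
  have hm2 : m^2 = 2*(1-ρ)/(μ₁^2+μ₂^2-2*ρ*μ₁*μ₂) := Real.sq_sqrt (by positivity)
  have hcm : (μ₁^2+μ₂^2-2*ρ*μ₁*μ₂)*m^2 = 2*(1-ρ) := by
    rw [hm2]; field_simp
    exact div_self (ne_of_gt (by linarith))
  set L1 := (1+μ₁*m) - ρ*(1+μ₂*m) with hL1
  set L2 := (1+μ₂*m) - ρ*(1+μ₁*m) with hL2
  clear_value L1 L2
  have hl2 : 0 < L2 := by
    have h1 : ρ*μ₁ ≤ μ₂ := by nlinarith
    have h2 : 0 ≤ (μ₂ - ρ*μ₁)*m := mul_nonneg (by linarith) hm.le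
    rw [hL2]; nlinarith
  have hl1 : 0 < L1 := by
    rw [hL1]
    rcases le_or_gt (ρ*μ₂) μ₁ with h | h
    · nlinarith
    · have hμlt : μ₁ < μ₂ := by nlinarith
      have hprod : 0 < (μ₂-μ₁)*((1+ρ)*(μ₁+μ₂-2*ρ*μ₂)) := by
        apply mul_pos (by linarith)
        apply mul_pos (by linarith) (by linarith)
      have hF : 2*(ρ*μ₂-μ₁)^2 < (1-ρ)*(μ₁^2+μ₂^2-2*ρ*μ₁*μ₂) := by nlinarith [hprod]
      have hcm' : (1-ρ)*((μ₁^2+μ₂^2-2*ρ*μ₁*μ₂)*m^2) = (1-ρ)*(2*(1-ρ)) := by rw [hcm]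
      have h4 := mul_lt_mul_of_pos_right hF (mul_pos hm hm)
      have h2 : (ρ*μ₂-μ₁)^2*m^2 < (1-ρ)^2 := by nlinarith [h4, hcm']
      have hu : (ρ*μ₂-μ₁)*m < 1-ρ := by nlinarith [mul_pos (sub_pos.mpr h) hm, h2]
      nlinarith [hu]
  have hWpos : ∀ t s : ℝ, 0 < t → t ≤ s → 0 < (L1^2+2*ρ*L1*L2)*t+L2^2*s := by
    intro t s ht hts
    have hs : 0 < s := lt_of_lt_of_le ht hts
    nlinarith [mul_pos (mul_pos hl1 hl1) ht, mul_pos (mul_pos hl2 hl2) hs,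
      mul_nonneg (mul_nonneg (mul_nonneg hρ0 hl1.le) hl2.le) ht.le]
  -- the lower bound for every element of every S t s
  have hlow : ∀ t s : ℝ, 0 < t → t ≤ s → ∀ q ∈
      { q : ℝ | ∃ x y : ℝ, 1 + μ₁ * t ≤ x ∧ 1 + μ₂ * s ≤ y ∧ q = quadF ρ t s x y },
      gLFun μ₁ μ₂ ρ m ≤ q := by
    rintro t s ht hts q ⟨x, y, hx, hy, rfl⟩
    have hYk := (Y_key μ₁ μ₂ ρ m t s L1 L2 hμ1 hμ12 hρ0 hρu hρ2' hm hcm hL1 hL2 ht hts).1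
    exact le_trans
      (M_le_div μ₁ μ₂ ρ m t s L1 L2 hρsq hm hcm hL1 hL2 (hWpos t s ht hts) hYk)
      (cs_bound μ₁ μ₂ ρ t s x y L1 L2 hμ1 hμ2 hρ0 hρsq hl1 hl2 ht hts hx hy)
  have hSne : ∀ t s : ℝ, Set.Nonempty
      { q : ℝ | ∃ x y : ℝ, 1 + μ₁ * t ≤ x ∧ 1 + μ₂ * s ≤ y ∧ q = quadF ρ t s x y } :=
    fun t s => ⟨quadF ρ t s (1+μ₁*t) (1+μ₂*s), 1+μ₁*t, 1+μ₂*s, le_rfl, le_rfl, rfl⟩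
  have hgle : ∀ t s : ℝ, 0 < t → t ≤ s → gLFun μ₁ μ₂ ρ m ≤ gFun μ₁ μ₂ ρ t s :=
    fun t s ht hts => le_csInf (hSne t s) (hlow t s ht hts)
  have hgmm : gFun μ₁ μ₂ ρ m m = gLFun μ₁ μ₂ ρ m := by
    apply le_antisymm
    · apply csInf_le ⟨gLFun μ₁ μ₂ ρ m, hlow m m hm le_rfl⟩
      exact ⟨1+μ₁*m, 1+μ₂*m, le_rfl, le_rfl, (quadF_diag μ₁ μ₂ ρ m hρsq hm).symm⟩
    · exact hgle m m hm le_rfl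
  have hval : gLFun μ₁ μ₂ ρ m = 2/(1+ρ)*(μ₁+μ₂+2/m) := by
    have hKid : (1+μ₁*m)^2+(1+μ₂*m)^2-2*ρ*(1+μ₁*m)*(1+μ₂*m)
        = 2*(1-ρ)*((μ₁+μ₂)*m+2) := by linear_combination hcm
    rw [gLFun]
    rw [show (1 + μ₁ * m) ^ 2 + (1 + μ₂ * m) ^ 2 - 2 * ρ * (1 + μ₁ * m) * (1 + μ₂ * m)
        = 2*(1-ρ)*((μ₁+μ₂)*m+2) from hKid]
    have h1 : (1:ℝ)+ρ ≠ 0 := by linarith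
    have h3 : 1-ρ^2 ≠ 0 := by nlinarith
    field_simp
    ring
  refine ⟨⟨⟨m, m, hm, le_rfl, hgmm.symm⟩, ?_⟩, hval, hgmm, ?_⟩
  · rintro v ⟨t, s, ht, hts, rfl⟩
    exact hgle t s ht hts
  · intro t s ht hts heq
    by_contra hne
    rw [not_and_or] at hne
    by_cases hsp : 0 < ρ ∨ μ₁ < μ₂
    · have hYk := (Y_key μ₁ μ₂ ρ m t s L1 L2 hμ1 hμ12 hρ0 hρu hρ2' hm hcm hL1 hL2
        ht hts).2 hsp hne
      have hlt := M_lt_div μ₁ μ₂ ρ m t s L1 L2 hρsq hm hcm hL1 hL2 (hWpos t s ht hts) hYk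
      have hge : (L1*(1+μ₁*t)+L2*(1+μ₂*s))^2 / ((L1^2+2*ρ*L1*L2)*t+L2^2*s)
          ≤ gFun μ₁ μ₂ ρ t s := by
        apply le_csInf (hSne t s)
        rintro q ⟨x, y, hx, hy, rfl⟩
        exact cs_bound μ₁ μ₂ ρ t s x y L1 L2 hμ1 hμ2 hρ0 hρsq hl1 hl2 ht hts hx hy
      rw [heq] at hge
      linarith
    · push_neg at hsp
      obtain ⟨hsp1, hsp2⟩ := hsp
      have hρz : ρ = 0 := le_antisymm hsp1 hρ0
      have hμe : μ₁ = μ₂ := le_antisymm hμ12 hsp2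
      subst hρz
      subst hμe
      have hμm : μ₁*m = 1 := by
        have h1 : (μ₁*m)^2 = 1 := by nlinarith [hcm]
        nlinarith [mul_pos hμ1 hm]
      have hlt := sp_strict μ₁ m t s hμ1 hm hμm ht hts hne
      have hge : (1+μ₁*t)^2/t + (1+μ₁*s)^2/s ≤ gFun μ₁ μ₁ 0 t s := by
        apply le_csInf (hSne t s)
        rintro q ⟨x, y, hx, hy, rfl⟩
        exact sp_bound μ₁ t s x y hμ1 ht hts hx hy
      rw [heq, sp_val μ₁ m hμ1 hm hμm] at hge
      linarith
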